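/- Let S₁, S₂ be spheres in Euclidean 3-space with radii r₁, r₂ > 0, let ℓ be a line, let Π be a plane and p ∈ Π a point. Suppose that infinitely many lines L with L ⊆ Π and p ∈ L are tangent to both S₁ and S₂ and meet ℓ. Then S₁ ∩ Π = {p} and S₂ ∩ Π = {p} (both spheres are tangent to Π at the point p), and moreover p ∈ ℓ or ℓ ⊆ Π. -/

import Mathlib

noncomputable section

set_option maxHeartbeats 1000000
open Metric EuclideanGeometry Module
open scoped RealInnerProductSpace


/-- Euclidean 3-space. -/
abbrev E3 : Type := EuclideanSpace ℝ (Fin 3)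

/-- A line in `ℝ³`: a 1-dimensional affine subspace. -/
def IsLine (L : AffineSubspace ℝ E3) : Prop := Module.finrank ℝ L.direction = 1

/-- A plane in `ℝ³`: a 2-dimensional affine subspace. -/
def IsPlane (P : AffineSubspace ℝ E3) : Prop := Module.finrank ℝ P.direction = 2

/-- A line is tangent to the sphere with centre `c` and radius `r` if the distance
from `c` to the line equals `r`. -/
def Tangent (c : E3) (r : ℝ) (L : AffineSubspace ℝ E3) : Prop :=
  Metric.infDist c (L : Set E3) = r

/-- A line `L` meets a line `ℓ` if they have a common point. -/
def Meets (L ℓ : AffineSubspace ℝ E3) : Prop :=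
  ((L : Set E3) ∩ (ℓ : Set E3)).Nonempty

lemma my_dist_sq_add {x y z : E3} (h : ⟪x - y, z - y⟫ = 0) :
    dist x z ^ 2 = dist x y ^ 2 + dist y z ^ 2 := by
  rw [dist_eq_norm, dist_eq_norm, dist_eq_norm]
  have hxz : x - z = (x - y) - (z - y) := by abel
  rw [hxz, norm_sub_sq_real, h]
  have : ‖y - z‖ = ‖z - y‖ := by rw [← neg_sub, norm_neg]
  rw [this]; ring

lemma my_infDist_eq_dist (L : AffineSubspace ℝ E3) (c m : E3) (hm : m ∈ L)
    (h : ∀ u ∈ L.direction, ⟪c - m, u⟫ = 0) :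
    Metric.infDist c (L : Set E3) = dist c m := by
  refine le_antisymm (Metric.infDist_le_dist_of_mem hm) ?_
  rw [Metric.infDist_eq_iInf]
  haveI : Nonempty (L : Set E3) := ⟨⟨m, hm⟩⟩
  refine le_ciInf fun y => ?_
  have hy : (y : E3) - m ∈ L.direction := by
    have := AffineSubspace.vsub_mem_direction y.2 hm
    simpa using this
  have h2 : dist c (y : E3) ^ 2 = dist c m ^ 2 + dist m (y : E3) ^ 2 :=
    my_dist_sq_add (h _ hy)
  nlinarith [dist_nonneg (x := c) (y := (y : E3)), dist_nonneg (x := c) (y := m),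
    dist_nonneg (x := m) (y := (y : E3))]

lemma line_eq_span {L : AffineSubspace ℝ E3} (hL : IsLine L) {x y : E3}
    (hxy : x ≠ y) (hx : x ∈ L) (hy : y ∈ L) : affineSpan ℝ {x, y} = L := by
  have hle : affineSpan ℝ {x, y} ≤ L := by
    rw [affineSpan_le]
    rintro z (rfl | rfl) <;> simpa
  haveI : FiniteDimensional ℝ L.direction := inferInstance
  have hdir : (affineSpan ℝ ({x, y} : Set E3)).direction = L.direction := by
    apply Submodule.eq_of_le_of_finrank_eq (AffineSubspace.direction_le hle)
    rw [direction_affineSpan, vectorSpan_pair, hL,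
      finrank_span_singleton (by simpa [sub_eq_zero] using hxy)]
  exact AffineSubspace.ext_of_direction_eq hdir
    ⟨x, mem_affineSpan ℝ (by simp), hx⟩

lemma exists_unit_dir {L : AffineSubspace ℝ E3} (hL : IsLine L) :
    ∃ v : E3, ‖v‖ = 1 ∧ L.direction = ℝ ∙ v := by
  have hbot : L.direction ≠ ⊥ := by
    intro hb; rw [IsLine, hb, finrank_bot] at hL; simp at hL
  obtain ⟨v₀, hv₀L, hv₀⟩ := Submodule.exists_mem_ne_zero_of_ne_bot hbot
  have hspan : (ℝ ∙ v₀) = L.direction :=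
    Submodule.eq_of_le_of_finrank_eq ((Submodule.span_singleton_le_iff_mem _ _).2 hv₀L)
      (by rw [finrank_span_singleton hv₀, hL])
  have hn : ‖v₀‖ ≠ 0 := norm_ne_zero_iff.2 hv₀
  refine ⟨‖v₀‖⁻¹ • v₀, ?_, ?_⟩
  · rw [norm_smul, norm_inv, norm_norm, inv_mul_cancel₀ hn]
  · rw [← hspan, Submodule.span_singleton_smul_eq (isUnit_iff_ne_zero.2 (inv_ne_zero hn)) v₀]

lemma tangent_pencil (c : E3) (r : ℝ) (hr : 0 < r)
    (P : AffineSubspace ℝ E3) (hP : IsPlane P) (p : E3) (hpP : p ∈ P)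
    (hinf : {L : AffineSubspace ℝ E3 | IsLine L ∧ (L : Set E3) ⊆ (P : Set E3) ∧ p ∈ L ∧
        Tangent c r L}.Infinite) :
    Metric.sphere c r ∩ (P : Set E3) = {p} := by
  classical
  haveI : Nonempty P := ⟨⟨p, hpP⟩⟩
  set S := {L : AffineSubspace ℝ E3 | IsLine L ∧ (L : Set E3) ⊆ (P : Set E3) ∧ p ∈ L ∧
      Tangent c r L} with hS
  set q : E3 := ↑(EuclideanGeometry.orthogonalProjection P c) with hq
  have hqP : q ∈ P := (EuclideanGeometry.orthogonalProjection P c).2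
  have horth : ∀ u ∈ P.direction, ⟪c - q, u⟫ = 0 := by
    intro u hu
    have h1 := EuclideanGeometry.vsub_orthogonalProjection_mem_direction_orthogonal P c
    have h2 := (Submodule.mem_orthogonal _ _).1 h1 u hu
    rw [vsub_eq_sub] at h2
    rw [real_inner_comm]; exact h2
  set w : E3 := q - p with hwdef
  have hwP : w ∈ P.direction := by
    have := AffineSubspace.vsub_mem_direction hqP hpP
    rwa [vsub_eq_sub] at this
  set t : ℝ := ‖c - q‖ ^ 2 + ‖w‖ ^ 2 - r ^ 2 with htdef
  have key : ∀ L ∈ S, ∀ v : E3, ‖v‖ = 1 → L.direction = (ℝ ∙ v) → ⟪w, v⟫ ^ 2 = t := by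
    rintro L ⟨hLline, hLP, hpL, hLtan⟩ v hv hvdir
    have hvL : v ∈ L.direction := hvdir ▸ Submodule.mem_span_singleton_self v
    have hLleP : L ≤ P := hLP
    have hvP : v ∈ P.direction := AffineSubspace.direction_le hLleP hvL
    set m : E3 := ⟪w, v⟫ • v + p with hm
    have hmL : m ∈ L :=
      AffineSubspace.vadd_mem_of_mem_direction (Submodule.smul_mem _ _ hvL) hpL
    have horthL : ∀ u ∈ L.direction, ⟪c - m, u⟫ = 0 := by
      intro u hu
      obtain ⟨s, rfl⟩ := (Submodule.mem_span_singleton).1 (hvdir ▸ hu)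
      have hcm : c - m = (c - q) + (w - ⟪w, v⟫ • v) := by rw [hm, hwdef]; abel
      have h1 : ⟪c - q, v⟫ = 0 := horth v hvP
      have h2 : ⟪w - ⟪w, v⟫ • v, v⟫ = 0 := by
        rw [inner_sub_left, real_inner_smul_left, real_inner_self_eq_norm_sq, hv]; ring
      rw [hcm, real_inner_smul_right, inner_add_left, h1, h2]; ring
    have hdist : dist c m = r := by
      rw [← my_infDist_eq_dist L c m hmL horthL]; exact hLtan
    have hmq : m - q ∈ P.direction := by
      have : m - q = ⟪w, v⟫ • v - w := by rw [hm, hwdef]; abel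
      rw [this]; exact Submodule.sub_mem _ (Submodule.smul_mem _ _ hvP) hwP
    have h3 : dist c m ^ 2 = dist c q ^ 2 + dist q m ^ 2 :=
      my_dist_sq_add (horth _ hmq)
    have h4 : dist q m ^ 2 = ‖w‖ ^ 2 - ⟪w, v⟫ ^ 2 := by
      have hqm : q - m = w - ⟪w, v⟫ • v := by rw [hm, hwdef]; abel
      rw [dist_eq_norm, hqm, norm_sub_sq_real, real_inner_smul_right,
        norm_smul, Real.norm_eq_abs, hv, mul_pow, sq_abs]
      ring
    rw [hdist, h4, dist_eq_norm] at h3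
    rw [htdef]; linarith
  set g : AffineSubspace ℝ E3 → E3 := fun L =>
    if h : ∃ v : E3, ‖v‖ = 1 ∧ L.direction = (ℝ ∙ v) then h.choose else 0 with hg
  have hgspec : ∀ L ∈ S, ‖g L‖ = 1 ∧ L.direction = (ℝ ∙ g L) := by
    intro L hL
    have h : ∃ v : E3, ‖v‖ = 1 ∧ L.direction = (ℝ ∙ v) := exists_unit_dir hL.1
    simp only [hg, dif_pos h]
    exact h.choose_spec
  have hginj : Set.InjOn g S := by
    intro L1 h1 L2 h2 he
    exact AffineSubspace.ext_of_direction_eq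
      (by rw [(hgspec L1 h1).2, he, (hgspec L2 h2).2]) ⟨p, h1.2.2.1, h2.2.2.1⟩
  have hw0 : w = 0 := by
    by_contra hw0
    have hnw : ‖w‖ ≠ 0 := norm_ne_zero_iff.2 hw0
    have hwlt : (ℝ ∙ w) < P.direction := by
      refine lt_of_le_of_ne ((Submodule.span_singleton_le_iff_mem _ _).2 hwP) ?_
      intro hEq
      have h12 : finrank ℝ (ℝ ∙ w : Submodule ℝ E3) = finrank ℝ P.direction := by rw [hEq]
      rw [finrank_span_singleton hw0, hP] at h12
      omega
    obtain ⟨u, huP, hu1, hwu⟩ :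
        ∃ u : E3, u ∈ P.direction ∧ ‖u‖ = 1 ∧ ⟪w, u⟫ = 0 := by
      obtain ⟨u₀, hu₀P, hu₀w⟩ := SetLike.exists_of_lt hwlt
      have hu₁P : u₀ - (⟪w, u₀⟫ / ‖w‖ ^ 2) • w ∈ P.direction :=
        Submodule.sub_mem _ hu₀P (Submodule.smul_mem _ _ hwP)
      have hwu₁ : ⟪w, u₀ - (⟪w, u₀⟫ / ‖w‖ ^ 2) • w⟫ = 0 := by
        rw [inner_sub_right, real_inner_smul_right, real_inner_self_eq_norm_sq]
        field_simp
        ring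
      have hu₁0 : u₀ - (⟪w, u₀⟫ / ‖w‖ ^ 2) • w ≠ 0 := by
        intro h0
        apply hu₀w
        rw [Submodule.mem_span_singleton]
        rw [sub_eq_zero] at h0
        exact ⟨⟪w, u₀⟫ / ‖w‖ ^ 2, h0.symm⟩
      have hnu₁ : ‖u₀ - (⟪w, u₀⟫ / ‖w‖ ^ 2) • w‖ ≠ 0 := norm_ne_zero_iff.2 hu₁0
      refine ⟨‖u₀ - (⟪w, u₀⟫ / ‖w‖ ^ 2) • w‖⁻¹ • (u₀ - (⟪w, u₀⟫ / ‖w‖ ^ 2) • w),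
        Submodule.smul_mem _ _ hu₁P, ?_, ?_⟩
      · rw [norm_smul, norm_inv, norm_norm, inv_mul_cancel₀ hnu₁]
      · rw [real_inner_smul_right, hwu₁, mul_zero]
    obtain ⟨e, heP, he1, hwe⟩ :
        ∃ e : E3, e ∈ P.direction ∧ ‖e‖ = 1 ∧ w = ‖w‖ • e := by
      refine ⟨‖w‖⁻¹ • w, Submodule.smul_mem _ _ hwP, ?_, ?_⟩
      · rw [norm_smul, norm_inv, norm_norm, inv_mul_cancel₀ hnw]
      · rw [smul_smul, mul_inv_cancel₀ hnw, one_smul]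
    have hwe' : ⟪w, e⟫ = ‖w‖ := by
      conv_lhs => rw [hwe]
      rw [real_inner_smul_left, real_inner_self_eq_norm_sq, he1]
      ring
    have heu : ⟪e, u⟫ = 0 := by
      have h1 : ⟪w, u⟫ = ‖w‖ * ⟪e, u⟫ := by
        conv_lhs => rw [hwe]
        rw [real_inner_smul_left]
      rw [hwu] at h1
      rcases mul_eq_zero.1 h1.symm with h | h
      · exact absurd h hnw
      · exact h
    have hsup : (ℝ ∙ e) ⊔ (ℝ ∙ u) = P.direction := by
      apply Submodule.eq_of_le_of_finrank_eq
        (sup_le ((Submodule.span_singleton_le_iff_mem _ _).2 heP)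
          ((Submodule.span_singleton_le_iff_mem _ _).2 huP))
      have hinf_bot : (ℝ ∙ e) ⊓ (ℝ ∙ u) = ⊥ := by
        rw [Submodule.eq_bot_iff]
        rintro z ⟨hz1, hz2⟩
        obtain ⟨a, rfl⟩ := Submodule.mem_span_singleton.1 hz1
        obtain ⟨b, hb⟩ := Submodule.mem_span_singleton.1 hz2
        have h1 : ⟪w, a • e⟫ = a * ‖w‖ := by rw [real_inner_smul_right, hwe']
        have h2 : ⟪w, a • e⟫ = 0 := by
          rw [← hb, real_inner_smul_right, hwu, mul_zero]
        have ha : a = 0 := by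
          rw [h2] at h1
          rcases mul_eq_zero.1 h1.symm with h | h
          · exact h
          · exact absurd h hnw
        rw [ha, zero_smul]
      have h1 : finrank ℝ ((ℝ ∙ e) ⊔ (ℝ ∙ u) : Submodule ℝ E3)
          + finrank ℝ ((ℝ ∙ e) ⊓ (ℝ ∙ u) : Submodule ℝ E3)
          = finrank ℝ (ℝ ∙ e : Submodule ℝ E3) + finrank ℝ (ℝ ∙ u : Submodule ℝ E3) :=
        Submodule.finrank_sup_add_finrank_inf_eq _ _
      rw [hinf_bot, finrank_bot, add_zero,
        finrank_span_singleton (norm_ne_zero_iff.1 (he1 ▸ one_ne_zero)),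
        finrank_span_singleton (norm_ne_zero_iff.1 (hu1 ▸ one_ne_zero))] at h1
      rw [h1, hP]
    have hdecomp : ∀ L ∈ S, ∃ a b : ℝ, g L = a • e + b • u ∧
        a ^ 2 = t / ‖w‖ ^ 2 ∧ a ^ 2 + b ^ 2 = 1 := by
      intro L hL
      obtain ⟨hv1, hvdir⟩ := hgspec L hL
      have hvP : g L ∈ P.direction :=
        AffineSubspace.direction_le (hL.2.1 : L ≤ P)
          (hvdir ▸ Submodule.mem_span_singleton_self (g L))
      obtain ⟨x, hx, y, hy, hxy⟩ := Submodule.mem_sup.1 (hsup ▸ hvP)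
      obtain ⟨a, rfl⟩ := Submodule.mem_span_singleton.1 hx
      obtain ⟨b, rfl⟩ := Submodule.mem_span_singleton.1 hy
      refine ⟨a, b, hxy.symm, ?_, ?_⟩
      · have hkey := key L hL (g L) hv1 hvdir
        have h5 : ⟪w, g L⟫ = a * ‖w‖ := by
          rw [← hxy, inner_add_right, real_inner_smul_right, real_inner_smul_right,
            hwe', hwu]
          ring
        rw [h5, mul_pow] at hkey
        rw [← hkey]
        have : ‖w‖ ^ 2 ≠ 0 := pow_ne_zero _ hnw
        field_simp
      · have hv2 : ‖g L‖ ^ 2 = a ^ 2 + b ^ 2 := by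
          rw [← hxy, norm_add_sq_real, real_inner_smul_left, real_inner_smul_right, heu,
            norm_smul, norm_smul, Real.norm_eq_abs, Real.norm_eq_abs, he1, hu1,
            mul_one, mul_one, sq_abs, sq_abs]
          ring
        rw [hv1, one_pow] at hv2
        exact hv2.symm
    obtain ⟨L₀, hL₀⟩ := hinf.nonempty
    obtain ⟨a₀, b₀, -, ha₀, hab₀⟩ := hdecomp L₀ hL₀
    have ht0 : 0 ≤ t / ‖w‖ ^ 2 := ha₀ ▸ sq_nonneg a₀
    have ht1 : t / ‖w‖ ^ 2 ≤ 1 := by nlinarith [sq_nonneg b₀]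
    set α : ℝ := Real.sqrt (t / ‖w‖ ^ 2) with hαdef
    set β : ℝ := Real.sqrt (1 - t / ‖w‖ ^ 2) with hβdef
    have hα2 : α ^ 2 = t / ‖w‖ ^ 2 := Real.sq_sqrt ht0
    have hβ2 : β ^ 2 = 1 - t / ‖w‖ ^ 2 := Real.sq_sqrt (by linarith)
    have himg : g '' S ⊆ {α • e + β • u, α • e + (-β) • u, (-α) • e + β • u,
        (-α) • e + (-β) • u} := by
      rintro _ ⟨L, hL, rfl⟩
      obtain ⟨a, b, hab, ha2, hab1⟩ := hdecomp L hL
      have ha : a = α ∨ a = -α := by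
        have : (a - α) * (a + α) = 0 := by nlinarith
        rcases mul_eq_zero.1 this with h | h
        · left; linarith
        · right; linarith
      have hb : b = β ∨ b = -β := by
        have : (b - β) * (b + β) = 0 := by nlinarith
        rcases mul_eq_zero.1 this with h | h
        · left; linarith
        · right; linarith
      rw [hab]
      rcases ha with rfl | rfl <;> rcases hb with rfl | rfl <;>
        simp only [Set.mem_insert_iff, Set.mem_singleton_iff] <;> tauto
    have hFfin : ({α • e + β • u, α • e + (-β) • u, (-α) • e + β • u,
        (-α) • e + (-β) • u} : Set E3).Finite := Set.toFinite _
    exact hinf (Set.Finite.of_finite_image (hFfin.subset himg) hginj)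
  -- now w = 0, conclude
  obtain ⟨L, hL⟩ := hinf.nonempty
  obtain ⟨v, hv1, hvdir⟩ := exists_unit_dir hL.1
  have hkey := key L hL v hv1 hvdir
  have ht0 : t = 0 := by
    rw [← hkey, hw0, inner_zero_left]
    ring
  have hqp : q = p := by
    have h0 : q - p = 0 := hw0
    rwa [sub_eq_zero] at h0
  have hcp : ‖c - p‖ = r := by
    have h1 : ‖c - q‖ ^ 2 = r ^ 2 := by
      rw [htdef, hw0] at ht0
      simp only [norm_zero] at ht0
      nlinarith
    rw [hqp] at h1
    nlinarith [norm_nonneg (c - p)]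
  ext x
  simp only [Set.mem_inter_iff, Metric.mem_sphere, Set.mem_singleton_iff]
  constructor
  · rintro ⟨hxs, hxP⟩
    have hxp : x - p ∈ P.direction := by
      have := AffineSubspace.vsub_mem_direction hxP hpP
      rwa [vsub_eq_sub] at this
    have hio : ⟪c - p, x - p⟫ = 0 := by
      have := horth _ hxp
      rwa [hqp] at this
    have h3 : dist c x ^ 2 = dist c p ^ 2 + dist p x ^ 2 := my_dist_sq_add hio
    have hdx : dist c x = r := by rw [dist_comm]; exact hxs
    have hdp : dist c p = r := by rw [dist_eq_norm]; exact hcp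
    have hz : dist p x = 0 := by
      rw [hdx, hdp] at h3
      nlinarith [dist_nonneg (x := p) (y := x)]
    exact (dist_eq_zero.1 hz).symm
  · rintro rfl
    exact ⟨by rw [dist_comm, dist_eq_norm]; exact hcp, hpP⟩

/-- If infinitely many lines lying in a plane `P` and passing through a point `p ∈ P`
are tangent to two spheres and meet a line `ℓ`, then both spheres are tangent to `P`
at `p`, and `ℓ` passes through `p` or lies in `P`. -/
theorem infinitely_many_pencil_tangents
    (c₁ c₂ : E3) (r₁ r₂ : ℝ) (hr₁ : 0 < r₁) (hr₂ : 0 < r₂)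
    (ℓ : AffineSubspace ℝ E3) (hℓ : IsLine ℓ)
    (P : AffineSubspace ℝ E3) (hP : IsPlane P) (p : E3) (hpP : p ∈ P)
    (hinf : {L : AffineSubspace ℝ E3 | IsLine L ∧ (L : Set E3) ⊆ (P : Set E3) ∧ p ∈ L ∧
        Tangent c₁ r₁ L ∧ Tangent c₂ r₂ L ∧ Meets L ℓ}.Infinite) :
    Metric.sphere c₁ r₁ ∩ (P : Set E3) = {p} ∧
    Metric.sphere c₂ r₂ ∩ (P : Set E3) = {p} ∧
    (p ∈ ℓ ∨ (ℓ : Set E3) ⊆ (P : Set E3)) := by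
  refine ⟨tangent_pencil c₁ r₁ hr₁ P hP p hpP
      (hinf.mono fun L hL => ⟨hL.1, hL.2.1, hL.2.2.1, hL.2.2.2.1⟩),
    tangent_pencil c₂ r₂ hr₂ P hP p hpP
      (hinf.mono fun L hL => ⟨hL.1, hL.2.1, hL.2.2.1, hL.2.2.2.2.1⟩), ?_⟩
  by_contra hcon
  push_neg at hcon
  obtain ⟨hpℓ, hℓP⟩ := hcon
  apply hinf
  apply Set.Subsingleton.finite
  intro L1 h1 L2 h2
  obtain ⟨x₁, hx₁L, hx₁ℓ⟩ := h1.2.2.2.2.2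
  obtain ⟨x₂, hx₂L, hx₂ℓ⟩ := h2.2.2.2.2.2
  have hx₁P : x₁ ∈ P := h1.2.1 hx₁L
  have hx₂P : x₂ ∈ P := h2.2.1 hx₂L
  have hx12 : x₁ = x₂ := by
    by_contra hne
    apply hℓP
    have hspan := line_eq_span hℓ hne hx₁ℓ hx₂ℓ
    rw [← hspan]
    have hle : affineSpan ℝ {x₁, x₂} ≤ P := by
      rw [affineSpan_le]
      rintro z (rfl | rfl) <;> assumption
    exact hle
  have hx₁p : p ≠ x₁ := fun h => hpℓ (h ▸ hx₁ℓ)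
  have e1 := line_eq_span h1.1 hx₁p h1.2.2.1 hx₁L
  have e2 := line_eq_span h2.1 hx₁p h2.2.2.1 (by rwa [hx12])
  rw [← e1, ← e2]
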